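/- Assume conditions (A1), (A2) and (A3). Then for every t > 0, ∫_t^∞ F(c(u)) du = ∫₀^∞ F(v_s(c(t))) ds = ∫₀^{c(t)} F(r)/ψ(r) dr, and all three quantities are finite. (Probabilistically, this is the identity P(A ≤ t) = E[e^{−c(t) Z₀}] for the time A to the most recent common ancestor of the stationary CBI-population Z₀.) -/

import Mathlib

open MeasureTheory Real Set Filter

/-- The (sub)-critical branching mechanism
`ψ(z) = b z + σ z² + ∫₀^∞ (e^{−z u} − 1 + z u) m(du)`. -/
noncomputable def psi (b σ : ℝ) (m : Measure ℝ) (z : ℝ) : ℝ :=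
  b * z + σ * z ^ 2 + ∫ u in Ioi (0 : ℝ), (Real.exp (-(z * u)) - 1 + z * u) ∂m

/-- Condition (A3): either `σ > 0` or `∫₀^1 u m(du) = ∞`. -/
def condA3 (σ : ℝ) (m : Measure ℝ) : Prop :=
  0 < σ ∨ ∫⁻ u in Ioc (0 : ℝ) 1, ENNReal.ofReal u ∂m = ⊤

/-- `v t λ ∈ (0, λ]` is the unique solution of `∫_{v_t(λ)}^{λ} dz/ψ(z) = t`
(the cumulant semigroup). -/
def IsCumulant (b σ : ℝ) (m : Measure ℝ) (v : ℝ → ℝ → ℝ) : Prop :=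
  ∀ lam > (0 : ℝ), ∀ t ≥ (0 : ℝ),
    v t lam ∈ Ioc 0 lam ∧ ∫ z in (v t lam)..lam, (psi b σ m z)⁻¹ = t

/-- The immigration mechanism `F(z) = β z + ∫₀^∞ (1 − e^{−z u}) n(du)`. -/
noncomputable def Fim (β : ℝ) (n : Measure ℝ) (z : ℝ) : ℝ :=
  β * z + ∫ u in Ioi (0 : ℝ), (1 - Real.exp (-(z * u))) ∂n

/-- Condition (A2): `∫₀^λ F(z)/ψ(z) dz < ∞` for some `λ > 0`. -/
def condA2 (b σ β : ℝ) (m n : Measure ℝ) : Prop :=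
  ∃ lam > (0 : ℝ), IntegrableOn (fun z => Fim β n z / psi b σ m z) (Ioo 0 lam)

/-- Under (A1) and (A3), `c(t) ∈ (0,∞)` is defined by `∫_{c(t)}^∞ dz/ψ(z) = t`. -/
def IsExtinctionRate (b σ : ℝ) (m : Measure ℝ) (c : ℝ → ℝ) : Prop :=
  ∀ t > (0 : ℝ), 0 < c t ∧ ∫ z in Ioi (c t), (psi b σ m z)⁻¹ = t


lemma aux_exp_ge (x : ℝ) : 0 ≤ Real.exp (-x) - 1 + x := by
  have := Real.add_one_le_exp (-x); linarith

lemma aux_one_sub (x : ℝ) : 1 - Real.exp (-x) ≤ x := by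
  have := Real.add_one_le_exp (-x); linarith

lemma aux_exp_le_self {x : ℝ} (hx : 0 ≤ x) : Real.exp (-x) - 1 + x ≤ x := by
  have : Real.exp (-x) ≤ 1 := Real.exp_le_one_iff.mpr (by linarith)
  linarith

lemma aux_sq {x : ℝ} (hx : 0 ≤ x) : Real.exp (-x) - 1 + x ≤ x ^ 2 / 2 := by
  set f : ℝ → ℝ := fun y => y ^ 2 / 2 - y + 1 - Real.exp (-y) with hf
  have hd : ∀ y : ℝ, HasDerivAt f (y - 1 + Real.exp (-y)) y := by
    intro y
    have h1 : HasDerivAt (fun y : ℝ => Real.exp (-y)) (-Real.exp (-y)) y := by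
      simpa using (hasDerivAt_neg y).exp
    have h2 : HasDerivAt (fun y : ℝ => y ^ 2 / 2 - y + 1) (y - 1) y := by
      have := ((hasDerivAt_pow 2 y).div_const 2).sub (hasDerivAt_id y)
      simpa using this.add_const 1
    simpa [f, sub_eq_add_neg] using h2.fun_add (h1.fun_neg)
  have hmono : Monotone f := by
    apply monotone_of_deriv_nonneg
    · exact fun y => (hd y).differentiableAt
    · intro y; rw [(hd y).deriv]; have := aux_exp_ge y; linarith
  have h0 : f 0 = 0 := by simp [f]
  have := hmono hx
  rw [h0] at this
  simp only [f] at this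
  linarith

lemma aux_mono {x y : ℝ} (hy : 0 ≤ y) (hxy : y ≤ x) :
    Real.exp (-y) - 1 + y ≤ Real.exp (-x) - 1 + x := by
  have h1 : Real.exp (-y) - Real.exp (-x) = Real.exp (-y) * (1 - Real.exp (-(x - y))) := by
    rw [mul_sub, mul_one, ← Real.exp_add]; ring_nf
  have h2 : 1 - Real.exp (-(x - y)) ≤ x - y := aux_one_sub _
  have h3 : Real.exp (-y) ≤ 1 := Real.exp_le_one_iff.mpr (by linarith)
  have h4 : 0 ≤ 1 - Real.exp (-(x - y)) := by
    have : Real.exp (-(x - y)) ≤ 1 := Real.exp_le_one_iff.mpr (by linarith)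
    linarith
  nlinarith [Real.exp_pos (-y)]

lemma aux_bound {z u : ℝ} (hz : 0 ≤ z) (hu : 0 < u) :
    Real.exp (-(z * u)) - 1 + z * u ≤ (z + z ^ 2) * min u (u ^ 2) := by
  rcases le_total u 1 with h | h
  · rw [min_eq_right (by nlinarith : u ^ 2 ≤ u)]
    have := aux_sq (mul_nonneg hz hu.le)
    nlinarith
  · rw [min_eq_left (by nlinarith : u ≤ u ^ 2)]
    have := aux_exp_le_self (mul_nonneg hz hu.le)
    nlinarith

lemma aux_bound_F {z u : ℝ} (hz : 0 ≤ z) (hu : 0 < u) :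
    1 - Real.exp (-(z * u)) ≤ (1 + z) * min 1 u := by
  rcases le_total u 1 with h | h
  · rw [min_eq_right h]
    have := aux_one_sub (z * u)
    nlinarith
  · rw [min_eq_left h]
    have : Real.exp (-(z * u)) ≥ 0 := (Real.exp_pos _).le
    nlinarith

section psi_lemmas
variable {b σ : ℝ} {m : Measure ℝ}

lemma min_nonneg' {u : ℝ} (hu : 0 < u) : 0 ≤ min u (u ^ 2) :=
  le_min hu.le (sq_nonneg u)

lemma psi_integrand_integrable (hm : IntegrableOn (fun u => min u (u ^ 2)) (Ioi 0) m)
    {z : ℝ} (hz : 0 ≤ z) :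
    IntegrableOn (fun u => Real.exp (-(z * u)) - 1 + z * u) (Ioi 0) m := by
  apply Integrable.mono' (hm.const_mul (z + z ^ 2))
  · exact (Continuous.aestronglyMeasurable (by continuity))
  · filter_upwards [ae_restrict_mem measurableSet_Ioi] with u hu
    rw [Real.norm_eq_abs, abs_of_nonneg (aux_exp_ge _)]
    exact aux_bound hz hu

lemma fim_integrand_integrable {β : ℝ} {n : Measure ℝ}
    (hn : IntegrableOn (fun u => min 1 u) (Ioi 0) n) {z : ℝ} (hz : 0 ≤ z) :
    IntegrableOn (fun u => 1 - Real.exp (-(z * u))) (Ioi 0) n := by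
  apply Integrable.mono' (hn.const_mul (1 + z))
  · exact (Continuous.aestronglyMeasurable (by continuity))
  · filter_upwards [ae_restrict_mem measurableSet_Ioi] with u hu
    rw [Real.norm_eq_abs, abs_of_nonneg (by have := aux_one_sub (z * u); have := Real.exp_le_one_iff.mpr (neg_nonpos.mpr (mul_nonneg hz hu.le)); linarith)]
    exact aux_bound_F hz hu

lemma psi_continuousOn (hm : IntegrableOn (fun u => min u (u ^ 2)) (Ioi 0) m) :
    ContinuousOn (psi b σ m) (Ioi 0) := by
  have h1 : Continuous fun z : ℝ => b * z + σ * z ^ 2 := by continuity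
  intro z₀ hz₀
  apply ContinuousWithinAt.add (h1.continuousAt.continuousWithinAt)
  apply ContinuousAt.continuousWithinAt
  have hz₀' : (0:ℝ) < z₀ := hz₀
  have hmem : Ioo (0:ℝ) (z₀ + 1) ∈ nhds z₀ :=
    isOpen_Ioo.mem_nhds ⟨hz₀', by linarith⟩
  apply continuousAt_of_dominated (bound := fun u => ((z₀+1) + (z₀+1) ^ 2) * min u (u ^ 2))
  · filter_upwards with z
    exact (Continuous.aestronglyMeasurable (by continuity))
  · filter_upwards [hmem] with z hz
    filter_upwards [ae_restrict_mem measurableSet_Ioi] with u hu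
    rw [Real.norm_eq_abs, abs_of_nonneg (aux_exp_ge _)]
    calc Real.exp (-(z * u)) - 1 + z * u ≤ Real.exp (-((z₀+1) * u)) - 1 + (z₀+1) * u := by
          apply aux_mono (mul_nonneg hz.1.le hu.le)
          exact mul_le_mul_of_nonneg_right (by linarith [hz.2]) hu.le
      _ ≤ ((z₀+1) + (z₀+1) ^ 2) * min u (u ^ 2) := aux_bound (by linarith) hu
  · exact hm.const_mul _
  · filter_upwards with u
    exact (Continuous.continuousAt (by continuity))

lemma fim_continuousOn {β : ℝ} {n : Measure ℝ}
    (hn : IntegrableOn (fun u => min 1 u) (Ioi 0) n) :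
    ContinuousOn (Fim β n) (Ioi 0) := by
  have h1 : Continuous fun z : ℝ => β * z := by continuity
  intro z₀ hz₀
  apply ContinuousWithinAt.add (h1.continuousAt.continuousWithinAt)
  apply ContinuousAt.continuousWithinAt
  have hz₀' : (0:ℝ) < z₀ := hz₀
  have hmem : Ioo (0:ℝ) (z₀ + 1) ∈ nhds z₀ :=
    isOpen_Ioo.mem_nhds ⟨hz₀', by linarith⟩
  apply continuousAt_of_dominated (bound := fun u => (1 + (z₀+1)) * min 1 u)
  · filter_upwards with z
    exact (Continuous.aestronglyMeasurable (by continuity))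
  · filter_upwards [hmem] with z hz
    filter_upwards [ae_restrict_mem measurableSet_Ioi] with u hu
    have h0 : 0 ≤ 1 - Real.exp (-(z * u)) := by
      have := Real.exp_le_one_iff.mpr (neg_nonpos.mpr (mul_nonneg hz.1.le hu.le)); linarith
    rw [Real.norm_eq_abs, abs_of_nonneg h0]
    calc 1 - Real.exp (-(z * u)) ≤ 1 - Real.exp (-((z₀+1) * u)) := by
          have : Real.exp (-((z₀+1) * u)) ≤ Real.exp (-(z * u)) := by
            apply Real.exp_le_exp.mpr
            simp only [neg_le_neg_iff]
            exact mul_le_mul_of_nonneg_right (by linarith [hz.2]) hu.le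
          linarith
      _ ≤ (1 + (z₀+1)) * min 1 u := aux_bound_F (by linarith) hu
  · exact hn.const_mul _
  · filter_upwards with u
    exact (Continuous.continuousAt (by continuity))

end psi_lemmas

lemma psi_pos {b σ : ℝ} {m : Measure ℝ} (hb : 0 ≤ b) (hσ : 0 ≤ σ)
    (hm : IntegrableOn (fun u => min u (u ^ 2)) (Ioi 0) m) (hA3 : condA3 σ m)
    {z : ℝ} (hz : 0 < z) : 0 < psi b σ m z := by
  have hint : 0 ≤ ∫ u in Ioi (0:ℝ), (Real.exp (-(z * u)) - 1 + z * u) ∂m :=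
    setIntegral_nonneg measurableSet_Ioi (fun u _ => aux_exp_ge _)
  rcases hA3 with hσ' | hminf
  · have : 0 < σ * z ^ 2 := by positivity
    have : 0 ≤ b * z := by positivity
    unfold psi; linarith
  · -- find δ ∈ (0,1) with m (Ioc δ 1) > 0
    have hδ : ∃ δ : ℝ, 0 < δ ∧ δ < 1 ∧ 0 < m (Ioc δ 1) := by
      by_contra h
      push_neg at h
      have hnull : ∀ k : ℕ, m (Ioc ((1:ℝ)/(k+2)) 1) = 0 := by
        intro k
        have h1 : (0:ℝ) < 1/(k+2) := by positivity
        have h2 : (1:ℝ)/(k+2) < 1 := by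
          rw [div_lt_one (by positivity)]; push_cast; linarith
        exact le_antisymm (h _ h1 h2) zero_le
      have hU : Ioc (0:ℝ) 1 = ⋃ k : ℕ, Ioc ((1:ℝ)/(k+2)) 1 := by
        ext x
        simp only [mem_Ioc, mem_iUnion]
        constructor
        · rintro ⟨hx0, hx1⟩
          obtain ⟨k, hk⟩ := exists_nat_gt (1/x)
          refine ⟨k, ?_, hx1⟩
          rw [div_lt_iff₀ (by positivity)]
          rw [div_lt_iff₀ hx0] at hk
          nlinarith
        · rintro ⟨k, hk1, hk2⟩
          exact ⟨lt_trans (by positivity) hk1, hk2⟩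
      have : m (Ioc (0:ℝ) 1) = 0 := by
        rw [hU]
        exact measure_iUnion_null fun k => hnull k
      rw [setLIntegral_measure_zero _ _ this] at hminf
      simp at hminf
    obtain ⟨δ, hδ0, hδ1, hδm⟩ := hδ
    -- m (Ioc δ 1) is finite
    have hfin : m (Ioc δ 1) < ⊤ := by
      have hsub : Ioc δ 1 ⊆ {u | min δ (δ ^ 2) ≤ ‖min u (u ^ 2)‖} ∩ Ioi 0 := by
        intro x hx
        have hx0 : 0 < x := lt_trans hδ0 hx.1
        refine ⟨?_, hx0⟩
        have h1 : min δ (δ ^ 2) ≤ min x (x ^ 2) := by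
          apply le_min
          · exact le_trans (min_le_left _ _) hx.1.le
          · exact le_trans (min_le_right _ _) (by nlinarith [hx.1.le])
        show min δ (δ ^ 2) ≤ ‖min x (x ^ 2)‖
        rwa [Real.norm_eq_abs, abs_of_nonneg (le_min hx0.le (sq_nonneg x))]
      have := hm.measure_norm_ge_lt_top (ε := min δ (δ ^ 2)) (lt_min hδ0 (by positivity))
      calc m (Ioc δ 1) = m.restrict (Ioi 0) (Ioc δ 1) := by
            rw [Measure.restrict_apply measurableSet_Ioc]
            congr 1
            exact (inter_eq_left.mpr (fun x hx => lt_trans hδ0 hx.1)).symm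
        _ ≤ m.restrict (Ioi 0) {u | min δ (δ ^ 2) ≤ ‖min u (u ^ 2)‖} := by
            apply measure_mono
            intro x hx
            exact (hsub hx).1
        _ < ⊤ := this
    -- lower bound
    set κ := Real.exp (-(z * δ)) - 1 + z * δ with hκ
    have hκpos : 0 < κ := by
      have h1 := Real.add_one_lt_exp (x := -(z * δ)) (neg_lt_zero.mpr (by positivity : (0:ℝ) < z * δ)).ne
      rw [hκ]; linarith
    have hge : κ * (m (Ioc δ 1)).toReal ≤ ∫ u in Ioi (0:ℝ), (Real.exp (-(z * u)) - 1 + z * u) ∂m := by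
      have hi := psi_integrand_integrable hm hz.le
      have hsub : Ioc δ 1 ⊆ Ioi (0:ℝ) := fun x hx => lt_trans hδ0 hx.1
      calc κ * (m (Ioc δ 1)).toReal = ∫ u in Ioc δ 1, κ ∂m := by
            rw [setIntegral_const, smul_eq_mul, mul_comm]; rfl
        _ ≤ ∫ u in Ioc δ 1, (Real.exp (-(z * u)) - 1 + z * u) ∂m := by
            apply setIntegral_mono_on (integrableOn_const hfin.ne)
              (hi.mono_set hsub) measurableSet_Ioc
            intro x hx
            rw [hκ]
            apply aux_mono (by positivity)
            exact mul_le_mul_of_nonneg_left hx.1.le hz.le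
        _ ≤ ∫ u in Ioi (0:ℝ), (Real.exp (-(z * u)) - 1 + z * u) ∂m := by
            apply setIntegral_mono_set hi
            · filter_upwards [ae_restrict_mem measurableSet_Ioi] with u hu
              exact aux_exp_ge _
            · exact HasSubset.Subset.eventuallyLE hsub
    have hpos : 0 < κ * (m (Ioc δ 1)).toReal := by
      apply mul_pos hκpos
      exact ENNReal.toReal_pos hδm.ne' hfin.ne
    have : 0 ≤ b * z := by positivity
    have : 0 ≤ σ * z ^ 2 := by positivity
    unfold psi; linarith

theorem tmrca_distribution_identity (b σ β : ℝ) (m n : Measure ℝ)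
    (hb : 0 ≤ b) (hσ : 0 ≤ σ) (hβ : 0 ≤ β)
    (hm : IntegrableOn (fun u => min u (u ^ 2)) (Ioi 0) m)
    (hn : IntegrableOn (fun u => min 1 u) (Ioi 0) n)
    (hA1 : IntegrableOn (fun z => (psi b σ m z)⁻¹) (Ioi 1))
    (hA2 : condA2 b σ β m n) (hA3 : condA3 σ m)
    (v : ℝ → ℝ → ℝ) (hv : IsCumulant b σ m v)
    (c : ℝ → ℝ) (hc : IsExtinctionRate b σ m c) :
    ∀ t > (0 : ℝ),
      IntegrableOn (fun u => Fim β n (c u)) (Ioi t) ∧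
      IntegrableOn (fun s => Fim β n (v s (c t))) (Ioi 0) ∧
      IntegrableOn (fun r => Fim β n r / psi b σ m r) (Ioo 0 (c t)) ∧
      (∫ u in Ioi t, Fim β n (c u)) = (∫ s in Ioi (0 : ℝ), Fim β n (v s (c t))) ∧
      (∫ s in Ioi (0 : ℝ), Fim β n (v s (c t))) =
        ∫ r in Ioo (0 : ℝ) (c t), Fim β n r / psi b σ m r := by
  intro t ht
  obtain ⟨hl0, hlint⟩ := hc t ht
  set ψ := psi b σ m with hψdef
  set F := Fim β n with hFdef
  set lam := c t with hlam
  -- basic facts about ψ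
  have hψpos : ∀ z ∈ Ioi (0:ℝ), 0 < ψ z := fun z hz => psi_pos hb hσ hm hA3 hz
  have hψcont : ContinuousOn ψ (Ioi 0) := psi_continuousOn hm
  have hψinv_cont : ContinuousOn (fun z => (ψ z)⁻¹) (Ioi 0) :=
    hψcont.inv₀ (fun z hz => (hψpos z hz).ne')
  have hFcont : ContinuousOn F (Ioi 0) := fim_continuousOn hn
  -- interval integrability of ψ⁻¹
  have hintII : ∀ {a b' : ℝ}, 0 < a → 0 < b' → IntervalIntegrable (fun z => (ψ z)⁻¹) volume a b' := by
    intro a b' ha hb'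
    apply ContinuousOn.intervalIntegrable
    apply hψinv_cont.mono
    intro x hx
    rcases le_total a b' with h | h
    · rw [uIcc_of_le h] at hx; exact lt_of_lt_of_le ha hx.1
    · rw [uIcc_of_ge h] at hx; exact lt_of_lt_of_le hb' hx.1
  -- integrability of ψ⁻¹ on Ioi a
  have hIoi : ∀ {a : ℝ}, 0 < a → IntegrableOn (fun z => (ψ z)⁻¹) (Ioi a) volume := by
    intro a ha
    rcases le_total 1 a with h | h
    · exact hA1.mono_set (Ioi_subset_Ioi h)
    · rw [← Ioc_union_Ioi_eq_Ioi h]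
      apply IntegrableOn.union _ hA1
      exact (hintII ha one_pos).1
  -- Hfun and its properties
  set Hf : ℝ → ℝ := fun a => ∫ z in Ioi a, (ψ z)⁻¹ with hHf
  have hHadd : ∀ {a b' : ℝ}, 0 < a → a ≤ b' →
      Hf a = (∫ z in a..b', (ψ z)⁻¹) + Hf b' := by
    intro a b' ha hab
    have hb' : 0 < b' := lt_of_lt_of_le ha hab
    rw [intervalIntegral.integral_of_le hab, hHf]
    simp only
    rw [← Ioc_union_Ioi_eq_Ioi hab,
      setIntegral_union (Ioc_disjoint_Ioi le_rfl) measurableSet_Ioi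
        ((hIoi ha).mono_set Ioc_subset_Ioi_self) (hIoi hb')]
  have hHanti : StrictAntiOn Hf (Ioi 0) := by
    intro a ha b' hb' hab
    have h1 := hHadd ha hab.le
    have h2 : 0 < ∫ z in a..b', (ψ z)⁻¹ := by
      apply intervalIntegral.intervalIntegral_pos_of_pos_on (hintII ha hb') _ hab
      intro x hx
      exact inv_pos.mpr (hψpos x (lt_trans ha hx.1))
    linarith
  -- G
  set G : ℝ → ℝ := fun r => ∫ z in r..lam, (ψ z)⁻¹ with hGdef
  have hHlam : Hf lam = t := hlint
  have hGeq : ∀ {x : ℝ}, 0 < x → x ≤ lam → G x = Hf x - t := by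
    intro x hx hxl
    have h1 := hHadd hx hxl
    show (∫ z in x..lam, (ψ z)⁻¹) = Hf x - t
    linarith
  have hGpos : ∀ {x : ℝ}, 0 < x → x < lam → 0 < G x := by
    intro x hx hxl
    rw [hGeq hx hxl.le]
    have h3 := hHanti hx (show lam ∈ Ioi (0:ℝ) from hl0) hxl
    linarith
  have hGinj : InjOn G (Ioc 0 lam) := by
    intro x hx y hy hxy
    rw [hGeq hx.1 hx.2, hGeq hy.1 hy.2] at hxy
    exact hHanti.injOn hx.1 hy.1 (by linarith)
  -- Key1 : v s lam = c (t + s) for s > 0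
  have hvmem : ∀ {s : ℝ}, 0 ≤ s → v s lam ∈ Ioc 0 lam := fun {s} hs => (hv lam hl0 s hs).1
  have hvint : ∀ {s : ℝ}, 0 ≤ s → G (v s lam) = s := fun {s} hs => (hv lam hl0 s hs).2
  have hHv : ∀ {s : ℝ}, 0 ≤ s → Hf (v s lam) = t + s := by
    intro s hs
    have h1 := hGeq (hvmem hs).1 (hvmem hs).2
    rw [hvint hs] at h1
    linarith
  have key1 : ∀ {s : ℝ}, 0 < s → v s lam = c (t + s) := by
    intro s hs
    obtain ⟨hc1, hc2⟩ := hc (t + s) (by linarith)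
    apply hHanti.injOn (hvmem hs.le).1 hc1
    rw [hHv hs.le]
    exact (show Hf (c (t+s)) = t + s from hc2).symm
  -- Key2 : v (G r) lam = r for r ∈ Ioo 0 lam
  have key2 : ∀ {r : ℝ}, r ∈ Ioo 0 lam → v (G r) lam = r := by
    intro r hr
    have hGr : 0 < G r := hGpos hr.1 hr.2
    apply hGinj (hvmem hGr.le) (Ioo_subset_Ioc_self hr)
    rw [hvint hGr.le]
  -- G derivative
  have hGderiv : ∀ {x : ℝ}, 0 < x → HasDerivAt G (-(ψ x)⁻¹) x := by
    intro x hx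
    exact intervalIntegral.integral_hasDerivAt_left (hintII hx hl0)
      (ContinuousOn.stronglyMeasurableAtFilter isOpen_Ioi hψinv_cont x hx)
      (hψinv_cont.continuousAt (isOpen_Ioi.mem_nhds hx))
  -- image
  have himage : G '' Ioo 0 lam = Ioi 0 := by
    apply Subset.antisymm
    · rintro s ⟨r, hr, rfl⟩
      exact hGpos hr.1 hr.2
    · intro s hs
      refine ⟨v s lam, ⟨(hvmem hs.le).1, ?_⟩, hvint hs.le⟩
      rcases lt_or_eq_of_le (hvmem hs.le).2 with h | h
      · exact h
      · exfalso
        have := hvint hs.le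
        rw [h] at this
        rw [hGdef] at this
        simp at this
        rw [← this] at hs
        exact lt_irrefl _ (mem_Ioi.mp hs)
  -- (c) integrability of F/ψ on Ioo 0 lam
  obtain ⟨lam0, hlam0, hA2i⟩ := hA2
  have hFC : ContinuousOn (fun r => F r / ψ r) (Ioi 0) :=
    hFcont.div hψcont (fun z hz => (hψpos z hz).ne')
  have hc_int : IntegrableOn (fun r => F r / ψ r) (Ioo 0 lam) := by
    set a := min lam0 lam with ha
    have ha0 : 0 < a := lt_min hlam0 hl0
    have h1 : IntegrableOn (fun r => F r / ψ r) (Ioo 0 a) :=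
      hA2i.mono_set (Ioo_subset_Ioo_right (min_le_left _ _))
    have h2 : IntegrableOn (fun r => F r / ψ r) (Icc a lam) := by
      apply ContinuousOn.integrableOn_Icc
      apply hFC.mono
      intro x hx
      exact lt_of_lt_of_le ha0 hx.1
    apply (h1.union h2).mono_set
    intro x hx
    rcases lt_or_ge x a with h | h
    · exact Or.inl ⟨hx.1, h⟩
    · exact Or.inr ⟨h, hx.2.le⟩
  -- change of variables
  set g : ℝ → ℝ := fun s => F (v s lam) with hg
  have hderivW : ∀ x ∈ Ioo (0:ℝ) lam, HasDerivWithinAt G (-(ψ x)⁻¹) (Ioo 0 lam) x :=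
    fun x hx => (hGderiv hx.1).hasDerivWithinAt
  have hinj : InjOn G (Ioo 0 lam) := hGinj.mono Ioo_subset_Ioc_self
  have hcovEq := integral_image_eq_integral_abs_deriv_smul measurableSet_Ioo hderivW hinj g
  have hcovInt := integrableOn_image_iff_integrableOn_abs_deriv_smul measurableSet_Ioo hderivW hinj g
  rw [himage] at hcovEq hcovInt
  have hEq2 : EqOn (fun x => |(-(ψ x)⁻¹)| • g (G x)) (fun r => F r / ψ r) (Ioo 0 lam) := by
    intro r hr
    simp only [smul_eq_mul]
    rw [abs_neg, abs_of_pos (inv_pos.mpr (hψpos r hr.1)), hg]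
    simp only
    rw [key2 hr, div_eq_mul_inv, mul_comm]
  have hb_int : IntegrableOn g (Ioi 0) := by
    rw [hcovInt]
    exact hc_int.congr_fun hEq2.symm measurableSet_Ioo
  have heq23 : (∫ s in Ioi (0:ℝ), g s) = ∫ r in Ioo (0:ℝ) lam, F r / ψ r := by
    rw [hcovEq]
    exact setIntegral_congr_fun measurableSet_Ioo hEq2
  -- translation
  have hemb : MeasurableEmbedding (fun u : ℝ => u - t) :=
    (MeasurableEquiv.subRight t).measurableEmbedding
  have hmap : Measure.map (fun u : ℝ => u - t) (volume.restrict (Ioi t))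
      = volume.restrict (Ioi 0) := by
    have h1 : (Ioi t) = (fun u : ℝ => u - t) ⁻¹' (Ioi 0) := by
      ext x; simp [sub_pos]
    rw [h1, ← Measure.restrict_map hemb.measurable measurableSet_Ioi]
    congr 1
    have h2 : (fun u : ℝ => u - t) = fun u : ℝ => u + (-t) := by
      funext u; ring
    rw [h2]
    exact map_add_right_eq_self volume (-t)
  have hint_a : IntegrableOn (g ∘ (fun u : ℝ => u - t)) (Ioi t) := by
    have h := hemb.integrable_map_iff (g := g) (μ := volume.restrict (Ioi t))
    rw [hmap] at h
    exact h.mp hb_int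
  have hEqa : EqOn (g ∘ (fun u : ℝ => u - t)) (fun u => F (c u)) (Ioi t) := by
    intro u hu
    have hut : 0 < u - t := sub_pos.mpr hu
    simp only [Function.comp, hg]
    rw [key1 hut]
    have : t + (u - t) = u := by ring
    rw [this]
  have heq12 : (∫ u in Ioi t, F (c u)) = ∫ s in Ioi (0:ℝ), g s := by
    calc (∫ u in Ioi t, F (c u))
        = ∫ u in Ioi t, (g ∘ (fun u : ℝ => u - t)) u :=
          (setIntegral_congr_fun measurableSet_Ioi hEqa).symm
      _ = ∫ s, g s ∂(Measure.map (fun u : ℝ => u - t) (volume.restrict (Ioi t))) :=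
          (hemb.integral_map (μ := volume.restrict (Ioi t)) g).symm
      _ = ∫ s in Ioi (0:ℝ), g s := by rw [hmap]
  exact ⟨hint_a.congr_fun hEqa measurableSet_Ioi, hb_int, hc_int, heq12, heq23⟩
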